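/- For every Δ ∈ D(sCSP), the distribution Δ satisfies its own characteristic formulae: Δ ⊨ φ_Δ and Δ ⊨ ψ_Δ. -/

import Mathlib

open Classical

noncomputable section

namespace PaperPCSP

/-! ### Finitely supported distributions as weight functions -/

/-- Weight functions on `X`; probability distributions are those satisfying `IsDist`. -/
abbrev Wt (X : Type) := X → ℝ

/-- The support of a weight function. -/
def dsupp {X : Type} (Δ : Wt X) : Set X := Function.support Δ

/-- `Δ` is a finitely supported probability distribution. -/
def IsDist {X : Type} (Δ : Wt X) : Prop :=
  (∀ x, 0 ≤ Δ x) ∧ (dsupp Δ).Finite ∧ ∑ᶠ x, Δ x = 1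

/-- The point distribution at `x`. -/
def dirac {X : Type} (x : X) : Wt X := fun y => if y = x then 1 else 0

/-- Pushforward of a weight function along a map. -/
def dmap {X Y : Type} (g : X → Y) (Δ : Wt X) : Wt Y :=
  fun y => ∑ᶠ x ∈ {x | g x = y}, Δ x

/-- Expected value of `f` under `Δ`. -/
def dexp {X : Type} (Δ : Wt X) (f : X → ℝ) : ℝ := ∑ᶠ x, Δ x * f x

/-! ### Syntax of pCSP -/

mutual
/-- Process terms of pCSP (over prefix alphabet `A`). -/
inductive PCSP (A : Type) : Type where
  | st : SCSP A → PCSP A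
  | pch : ℝ → PCSP A → PCSP A → PCSP A
/-- State-based process terms of pCSP. -/
inductive SCSP (A : Type) : Type where
  | nil : SCSP A
  | pre : A → PCSP A → SCSP A
  | ich : PCSP A → PCSP A → SCSP A
  | ech : SCSP A → SCSP A → SCSP A
  | par : Set A → SCSP A → SCSP A → SCSP A
end

mutual
/-- Well-formedness: all probabilistic choices have `p ∈ (0,1)`.  `pCSP` proper
consists of the well-formed terms. -/
inductive PWF : {A : Type} → PCSP A → Prop where
  | st {A} {s : SCSP A} : SWF s → PWF (.st s)
  | pch {A} {p : ℝ} {P Q : PCSP A} : 0 < p → p < 1 → PWF P → PWF Q → PWF (.pch p P Q)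
inductive SWF : {A : Type} → SCSP A → Prop where
  | nil {A} : SWF (SCSP.nil (A := A))
  | pre {A} {a : A} {P} : PWF P → SWF (.pre a P)
  | ich {A} {P Q : PCSP A} : PWF P → PWF Q → SWF (.ich P Q)
  | ech {A} {s t : SCSP A} : SWF s → SWF t → SWF (.ech s t)
  | par {A} {B : Set A} {s t : SCSP A} : SWF s → SWF t → SWF (.par B s t)
end

/-- Interpretation of process terms as distributions over state-based terms. -/
def PCSP.interp {A : Type} : PCSP A → Wt (SCSP A)
  | .st s => dirac s
  | .pch p P Q => fun t => p * P.interp t + (1 - p) * Q.interp t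

/-! ### Operational semantics -/

/-- The probabilistic labelled transition relation; `none` is the internal action τ. -/
inductive Step {A : Type} : SCSP A → Option A → Wt (SCSP A) → Prop where
  | pre (a : A) (P : PCSP A) : Step (.pre a P) (some a) P.interp
  | ichL (P Q : PCSP A) : Step (.ich P Q) none P.interp
  | ichR (P Q : PCSP A) : Step (.ich P Q) none Q.interp
  | echL {s₁ s₂ : SCSP A} {a : A} {Δ} :
      Step s₁ (some a) Δ → Step (.ech s₁ s₂) (some a) Δ
  | echR {s₁ s₂ : SCSP A} {a : A} {Δ} :
      Step s₂ (some a) Δ → Step (.ech s₁ s₂) (some a) Δ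
  | echTL {s₁ s₂ : SCSP A} {Δ} :
      Step s₁ none Δ → Step (.ech s₁ s₂) none (dmap (fun t => .ech t s₂) Δ)
  | echTR {s₁ s₂ : SCSP A} {Δ} :
      Step s₂ none Δ → Step (.ech s₁ s₂) none (dmap (fun t => .ech s₁ t) Δ)
  | parL {B : Set A} {s₁ s₂ : SCSP A} {α : Option A} {Δ} :
      Step s₁ α Δ → (∀ a, α = some a → a ∉ B) →
      Step (.par B s₁ s₂) α (dmap (fun t => .par B t s₂) Δ)
  | parR {B : Set A} {s₁ s₂ : SCSP A} {α : Option A} {Δ} :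
      Step s₂ α Δ → (∀ a, α = some a → a ∉ B) →
      Step (.par B s₁ s₂) α (dmap (fun t => .par B s₁ t) Δ)
  | parS {B : Set A} {s₁ s₂ : SCSP A} {a : A} {Δ₁ Δ₂} :
      a ∈ B → Step s₁ (some a) Δ₁ → Step s₂ (some a) Δ₂ →
      Step (.par B s₁ s₂) none
        (dmap (fun q : SCSP A × SCSP A => .par B q.1 q.2) (fun q => Δ₁ q.1 * Δ₂ q.2))

/-! ### Lifting relations to distributions, weak transitions -/

/-- Lifting of a state-vs-distribution relation to distributions. -/
def Lift {A : Type} (R : SCSP A → Wt (SCSP A) → Prop) (Δ Θ : Wt (SCSP A)) : Prop :=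
  ∃ (n : ℕ) (p : Fin n → ℝ) (s : Fin n → SCSP A) (Φ : Fin n → Wt (SCSP A)),
    (∀ i, 0 ≤ p i) ∧ (∑ i, p i = 1) ∧
    (Δ = fun t => ∑ i, p i * dirac (s i) t) ∧
    (∀ i, R (s i) (Φ i)) ∧
    (Θ = fun t => ∑ i, p i * Φ i t)

/-- The transition relation lifted to distributions. -/
def StepD {A : Type} (α : Option A) : Wt (SCSP A) → Wt (SCSP A) → Prop :=
  Lift (fun s Δ => Step s α Δ)

/-- `s --τ̂--> Δ` : a τ-step or staying put. -/
def stepTauHat {A : Type} (s : SCSP A) (Δ : Wt (SCSP A)) : Prop :=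
  Step s none Δ ∨ Δ = dirac s

/-- `==τ̂==>` : reflexive-transitive closure of the lifted `--τ̂-->`. -/
def TauStar {A : Type} : Wt (SCSP A) → Wt (SCSP A) → Prop :=
  Relation.ReflTransGen (Lift stepTauHat)

/-- `Δ ==â==> Θ` for a visible action `a`. -/
def WeakA {A : Type} (a : A) (Δ Θ : Wt (SCSP A)) : Prop :=
  ∃ Δ₁ Δ₂, TauStar Δ Δ₁ ∧ StepD (some a) Δ₁ Δ₂ ∧ TauStar Δ₂ Θ

/-- `Δ ==α̂==> Θ`, which is `==τ̂==>` when `α = τ`. -/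
def Weak {A : Type} : Option A → Wt (SCSP A) → Wt (SCSP A) → Prop
  | none => TauStar
  | some a => WeakA a

/-- `s ↛X` : the state `s` enables no action from `X ∪ {τ}`. -/
def SRefuses {A : Type} (s : SCSP A) (X : Set A) : Prop :=
  (∀ Δ, ¬ Step s none Δ) ∧ ∀ a ∈ X, ∀ Δ, ¬ Step s (some a) Δ

/-- `Δ ↛X` : every state in the support of `Δ` refuses `X`. -/
def DRefuses {A : Type} (Δ : Wt (SCSP A)) (X : Set A) : Prop :=
  ∀ s ∈ dsupp Δ, SRefuses s X

/-! ### Simulation and failure simulation -/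

/-- `R` is a simulation. -/
def IsSimulation {A : Type} (R : SCSP A → Wt (SCSP A) → Prop) : Prop :=
  ∀ s Θ α Δ, R s Θ → Step s α Δ → ∃ Θ', Weak α Θ Θ' ∧ Lift R Δ Θ'

/-- `R` is a failure simulation. -/
def IsFailureSim {A : Type} (R : SCSP A → Wt (SCSP A) → Prop) : Prop :=
  IsSimulation R ∧
  ∀ s Θ (X : Set A), R s Θ → SRefuses s X → ∃ Θ', TauStar Θ Θ' ∧ DRefuses Θ' X

/-- `s ⊲_S Θ`. -/
def simLE {A : Type} (s : SCSP A) (Θ : Wt (SCSP A)) : Prop :=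
  ∃ R, IsSimulation R ∧ R s Θ

/-- `s ⊲_FS Θ`. -/
def fsimLE {A : Type} (s : SCSP A) (Θ : Wt (SCSP A)) : Prop :=
  ∃ R, IsFailureSim R ∧ R s Θ

/-- The simulation preorder `P ⊑_S Q`. -/
def SimPre {A : Type} (P Q : PCSP A) : Prop :=
  ∃ Θ, TauStar Q.interp Θ ∧ Lift simLE P.interp Θ

/-- The failure simulation preorder `P ⊑_FS Q`. -/
def FSimPre {A : Type} (P Q : PCSP A) : Prop :=
  ∃ Θ, TauStar P.interp Θ ∧ Lift fsimLE Q.interp Θ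
/-! ### Syntactic operations: renaming, and ◻ / ∥ distributed over probabilistic choice -/

mutual
/-- Renaming of actions in a process term. -/
def mapP {A B : Type} (f : A → B) : PCSP A → PCSP B
  | .st s => .st (mapS f s)
  | .pch p P Q => .pch p (mapP f P) (mapP f Q)
def mapS {A B : Type} (f : A → B) : SCSP A → SCSP B
  | .nil => .nil
  | .pre a P => .pre (f a) (mapP f P)
  | .ich P Q => .ich (mapP f P) (mapP f Q)
  | .ech s t => .ech (mapS f s) (mapS f t)
  | .par X s t => .par (f '' X) (mapS f s) (mapS f t)
end

/-- `s ∥_B Q` for a state `s`, distributing over probabilistic choice. -/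
def parCS {A : Type} (B : Set A) (s : SCSP A) : PCSP A → PCSP A
  | .st t => .st (.par B s t)
  | .pch p Q₁ Q₂ => .pch p (parCS B s Q₁) (parCS B s Q₂)

/-- `P ∥_B Q` on processes, distributing over probabilistic choice. -/
def parC {A : Type} (B : Set A) : PCSP A → PCSP A → PCSP A
  | .st s, Q => parCS B s Q
  | .pch p P₁ P₂, Q => .pch p (parC B P₁ Q) (parC B P₂ Q)

/-- `s ◻ Q` for a state `s`, distributing over probabilistic choice. -/
def echCS {A : Type} (s : SCSP A) : PCSP A → PCSP A
  | .st t => .st (.ech s t)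
  | .pch p Q₁ Q₂ => .pch p (echCS s Q₁) (echCS s Q₂)

/-- `P ◻ Q` on processes, distributing over probabilistic choice. -/
def echC {A : Type} : PCSP A → PCSP A → PCSP A
  | .st s, Q => echCS s Q
  | .pch p P₁ P₂, Q => .pch p (echC P₁ Q) (echC P₂ Q)

/-- Finite (nonempty) indexed internal choice `⨅_{i} P i`. -/
def ichFin {A : Type} : (n : ℕ) → (Fin (n+1) → PCSP A) → PCSP A
  | 0, P => P 0
  | n+1, P => .st (.ich (P 0) (ichFin n (fun i => P i.succ)))

/-- Finite (nonempty) indexed probabilistic choice `⊕_{i} p i · P i`. -/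
def pchFin {A : Type} : (n : ℕ) → (Fin (n+1) → ℝ) → (Fin (n+1) → PCSP A) → PCSP A
  | 0, _, P => P 0
  | n+1, p, P => .pch (p 0) (P 0)
      (pchFin n (fun i => p i.succ / (1 - p 0)) (fun i => P i.succ))

/-- Finite (nonempty) indexed external choice of states `◻_{i} s i`. -/
def echFin {A : Type} : (n : ℕ) → (Fin (n+1) → SCSP A) → SCSP A
  | 0, s => s 0
  | n+1, s => .ech (s 0) (echFin n (fun i => s i.succ))

/-- External choice of a list of states (empty list gives `0`). -/
def echList {A : Type} : List (SCSP A) → SCSP A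
  | [] => .nil
  | s :: l => .ech s (echList l)

/-! ### State-based scalar testing -/

/-- The alphabet `Act ∪ {ω}` for ordinary (scalar) tests. -/
abbrev TAct (A : Type) := Sum A Unit

/-- The success action ω. -/
def omA {A : Type} : TAct A := Sum.inr ()

/-- Membership in the state-based results-gathering function `V` (with success action `w`). -/
inductive VMem {B : Type} (w : B) : SCSP B → ℝ → Prop where
  | succ {s : SCSP B} {Δ} : Step s (some w) Δ → VMem w s 1
  | step {s : SCSP B} {α : Option B} {Δ} (f : SCSP B → ℝ) :
      (∀ Θ, ¬ Step s (some w) Θ) → Step s α Δ →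
      (∀ t ∈ dsupp Δ, VMem w t (f t)) → VMem w s (dexp Δ f)
  | stuck {s : SCSP B} : (∀ α Δ, ¬ Step s α Δ) → VMem w s 0

/-- `V(Δ)` : the set of outcomes of a distribution, via choice functions. -/
def VD {B : Type} (w : B) (Δ : Wt (SCSP B)) : Set ℝ :=
  {r | ∃ f : SCSP B → ℝ, (∀ t ∈ dsupp Δ, VMem w t (f t)) ∧ r = dexp Δ f}

/-- The application `T ∥_Act P` of a test to a process. -/
def applyTest {A : Type} (T : PCSP (TAct A)) (P : PCSP A) : PCSP (TAct A) :=
  parC (Set.range Sum.inl) T (mapP Sum.inl P)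

/-- `A(T,P)` : state-based testing outcomes. -/
def Aset {A : Type} (T : PCSP (TAct A)) (P : PCSP A) : Set ℝ :=
  VD omA (applyTest T P).interp

/-- The Hoare preorder on sets of reals. -/
def HoareLE (X Y : Set ℝ) : Prop := ∀ x ∈ X, ∃ y ∈ Y, x ≤ y

/-- The Smyth preorder on sets of reals. -/
def SmythLE (X Y : Set ℝ) : Prop := ∀ y ∈ Y, ∃ x ∈ X, x ≤ y

/-- The may-testing preorder `⊑_pmay`. -/
def PMay {A : Type} (P Q : PCSP A) : Prop :=
  ∀ T : PCSP (TAct A), PWF T → HoareLE (Aset T P) (Aset T Q)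

/-- The must-testing preorder `⊑_pmust`. -/
def PMust {A : Type} (P Q : PCSP A) : Prop :=
  ∀ T : PCSP (TAct A), PWF T → SmythLE (Aset T P) (Aset T Q)

/-! ### Action-based scalar testing -/

/-- Membership in the action-based results-gathering function `V̄`. -/
inductive VBarMem {B : Type} (w : B) : SCSP B → ℝ → Prop where
  | succ {s : SCSP B} {Δ} : Step s (some w) Δ → VBarMem w s 1
  | step {s : SCSP B} {α : Option B} {Δ} (f : SCSP B → ℝ) :
      α ≠ some w → Step s α Δ →
      (∀ t ∈ dsupp Δ, VBarMem w t (f t)) → VBarMem w s (dexp Δ f)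
  | stuck {s : SCSP B} : (∀ α Δ, ¬ Step s α Δ) → VBarMem w s 0

/-- `V̄(Δ)`. -/
def VBarD {B : Type} (w : B) (Δ : Wt (SCSP B)) : Set ℝ :=
  {r | ∃ f : SCSP B → ℝ, (∀ t ∈ dsupp Δ, VBarMem w t (f t)) ∧ r = dexp Δ f}

/-- `Ā(T,P)` : action-based testing outcomes. -/
def AsetBar {A : Type} (T : PCSP (TAct A)) (P : PCSP A) : Set ℝ :=
  VBarD omA (applyTest T P).interp

/-- The action-based may-testing preorder `⊑̄_pmay`. -/
def PMayBar {A : Type} (P Q : PCSP A) : Prop :=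
  ∀ T : PCSP (TAct A), PWF T → HoareLE (AsetBar T P) (AsetBar T Q)

/-- The action-based must-testing preorder `⊑̄_pmust`. -/
def PMustBar {A : Type} (P Q : PCSP A) : Prop :=
  ∀ T : PCSP (TAct A), PWF T → SmythLE (AsetBar T P) (AsetBar T Q)
/-! ### ω-avoiding transitions and the relation ⊲ᵉ_FS -/

/-- `s --α-->_ω Δ` : a transition from a state not enabling the success action `w`. -/
def StepOmega {B : Type} (w : B) (s : SCSP B) (α : Option B) (Δ : Wt (SCSP B)) : Prop :=
  (∀ Θ, ¬ Step s (some w) Θ) ∧ Step s α Δ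

/-- `s --τ̂-->_ω Δ`. -/
def stepTauHatOm {B : Type} (w : B) (s : SCSP B) (Δ : Wt (SCSP B)) : Prop :=
  StepOmega w s none Δ ∨ Δ = dirac s

/-- `==τ̂==>_ω`. -/
def TauStarOm {B : Type} (w : B) : Wt (SCSP B) → Wt (SCSP B) → Prop :=
  Relation.ReflTransGen (Lift (stepTauHatOm w))

/-- `==â==>_ω` for a visible action `a`. -/
def WeakAOm {B : Type} (w : B) (a : B) (Δ Θ : Wt (SCSP B)) : Prop :=
  ∃ Δ₁ Δ₂, TauStarOm w Δ Δ₁ ∧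
    Lift (fun s Φ => StepOmega w s (some a) Φ) Δ₁ Δ₂ ∧ TauStarOm w Δ₂ Θ

/-- `==α̂==>_ω`. -/
def WeakOm {B : Type} (w : B) : Option B → Wt (SCSP B) → Wt (SCSP B) → Prop
  | none => TauStarOm w
  | some a => WeakAOm w a

/-- A postfixed point for the coinductive definition of `⊲ᵉ_FS`. -/
def IsEFailSim {B : Type} (w : B) (R : SCSP B → Wt (SCSP B) → Prop) : Prop :=
  (∀ s Θ α Δ, R s Θ → StepOmega w s α Δ → ∃ Θ', WeakOm w α Θ Θ' ∧ Lift R Δ Θ') ∧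
  (∀ s Θ (X : Set B), R s Θ → w ∈ X → SRefuses s X →
    ∃ Θ', TauStarOm w Θ Θ' ∧ DRefuses Θ' X)

/-- `s ⊲ᵉ_FS Θ` : the largest relation satisfying the transfer properties. -/
def efsimLE {B : Type} (w : B) (s : SCSP B) (Θ : Wt (SCSP B)) : Prop :=
  ∃ R, IsEFailSim w R ∧ R s Θ

/-! ### Vector-based testing with success actions from Ω -/

/-- `α!o` : update the `α`-component of the outcome tuple to 1 if `α` is a success action. -/
def bang {A Om : Type} (α : Option (Sum A Om)) (o : Om → ℝ) : Om → ℝ :=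
  fun w => if α = some (Sum.inr w) then 1 else o w

mutual
/-- Membership in the vector-based convex-closed results-gathering function `V̄↕^Ω`
for states.  -/
inductive WMem : {A Om : Type} → SCSP (Sum A Om) → (Om → ℝ) → Prop where
  | stuck {A Om : Type} {s : SCSP (Sum A Om)} :
      (∀ α Δ, ¬ Step s α Δ) → WMem s (fun _ => 0)
  | step {A Om : Type} {s : SCSP (Sum A Om)} {n : ℕ}
      (p : Fin (n+1) → ℝ) (α : Fin (n+1) → Option (Sum A Om))
      (Δ : Fin (n+1) → Wt (SCSP (Sum A Om))) (o : Fin (n+1) → Om → ℝ) :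
      (∀ i, 0 ≤ p i) → (∑ i, p i = 1) →
      (∀ i, Step s (α i) (Δ i)) →
      (∀ i, WMemD (Δ i) (o i)) →
      WMem s (fun w => ∑ i, p i * bang (α i) (o i) w)
/-- Membership in `V̄↕^Ω` for distributions. -/
inductive WMemD : {A Om : Type} → Wt (SCSP (Sum A Om)) → (Om → ℝ) → Prop where
  | mk {A Om : Type} {Δ : Wt (SCSP (Sum A Om))} (f : SCSP (Sum A Om) → Om → ℝ) :
      (∀ t ∈ dsupp Δ, WMem t (f t)) → WMemD Δ (fun w => ∑ᶠ t, Δ t * f t w)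
end

/-- `V̄↕^Ω(Δ)` as a set of outcome tuples. -/
def WsetD {A Om : Type} (Δ : Wt (SCSP (Sum A Om))) : Set (Om → ℝ) :=
  {o | WMemD Δ o}

/-- The application `T ∥_Act P` of an Ω-test to a process. -/
def applyTestO {A Om : Type} (T : PCSP (Sum A Om)) (P : PCSP A) : PCSP (Sum A Om) :=
  parC (Set.range Sum.inl) T (mapP Sum.inl P)

/-- `A↕^Ω(T,P)` : vector-based testing outcomes of a process. -/
def AO {A Om : Type} (T : PCSP (Sum A Om)) (P : PCSP A) : Set (Om → ℝ) :=
  WsetD (applyTestO T P).interp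

/-- `A↕^Ω(T,Δ)` for a distribution `Δ ∈ D(sCSP)`, via expected values. -/
def AOD {A Om : Type} (T : PCSP (Sum A Om)) (Δ : Wt (SCSP A)) : Set (Om → ℝ) :=
  {o | ∃ g : SCSP A → Om → ℝ,
    (∀ s ∈ dsupp Δ, g s ∈ AO T (.st s)) ∧ o = fun w => ∑ᶠ s, Δ s * g s w}

/-- Hoare preorder on sets of outcome tuples (componentwise order). -/
def HoareLEV {Om : Type} (X Y : Set (Om → ℝ)) : Prop := ∀ x ∈ X, ∃ y ∈ Y, x ≤ y

/-- Smyth preorder on sets of outcome tuples (componentwise order). -/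
def SmythLEV {Om : Type} (X Y : Set (Om → ℝ)) : Prop := ∀ y ∈ Y, ∃ x ∈ X, x ≤ y

/-- The vector-based may-testing preorder `⊑̄^Ω_pmay`. -/
def PMayO {A : Type} (Om : Type) (P Q : PCSP A) : Prop :=
  ∀ T : PCSP (Sum A Om), PWF T → HoareLEV (AO T P) (AO T Q)

/-- The vector-based must-testing preorder `⊑̄^Ω_pmust`. -/
def PMustO {A : Type} (Om : Type) (P Q : PCSP A) : Prop :=
  ∀ T : PCSP (Sum A Om), PWF T → SmythLEV (AO T P) (AO T Q)

/-- The unit outcome vector `ω⃗`. -/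
def unitVec {Om : Type} (w : Om) : Om → ℝ := fun w' => if w' = w then 1 else 0

/-! Occurrence of an action in a process term. -/
mutual
/-- Occurrence of an action in a process term. -/
inductive PUses : {B : Type} → B → PCSP B → Prop where
  | st {B : Type} {b : B} {s} : SUses b s → PUses b (.st s)
  | pchL {B : Type} {b : B} {p P Q} : PUses b P → PUses b (.pch p P Q)
  | pchR {B : Type} {b : B} {p P Q} : PUses b Q → PUses b (.pch p P Q)
inductive SUses : {B : Type} → B → SCSP B → Prop where
  | preAct {B : Type} {b : B} {P} : SUses b (.pre b P)
  | pre {B : Type} {b : B} {a P} : PUses b P → SUses b (.pre a P)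
  | ichL {B : Type} {b : B} {P Q} : PUses b P → SUses b (.ich P Q)
  | ichR {B : Type} {b : B} {P Q} : PUses b Q → SUses b (.ich P Q)
  | echL {B : Type} {b : B} {s t} : SUses b s → SUses b (.ech s t)
  | echR {B : Type} {b : B} {s t} : SUses b t → SUses b (.ech s t)
  | parSet {B : Type} {b : B} {X s t} : b ∈ X → SUses b (.par X s t)
  | parL {B : Type} {b : B} {X s t} : SUses b s → SUses b (.par X s t)
  | parR {B : Type} {b : B} {X s t} : SUses b t → SUses b (.par X s t)
end
/-! ### The modal logic F -/

/-- Modal formulae of the logic `F`. -/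
inductive Form (A : Type) : Type where
  | ref : Set A → Form A
  | dia : A → Form A → Form A
  | conj : (n : ℕ) → (Fin n → Form A) → Form A
  | prob : (n : ℕ) → (Fin n → ℝ) → (Fin n → Form A) → Form A

/-- Well-formed formulae: probabilistic choices carry genuine distributions. -/
inductive WFF {A : Type} : Form A → Prop where
  | ref {X} : WFF (.ref X)
  | dia {a φ} : WFF φ → WFF (.dia a φ)
  | conj {n φs} : (∀ i, WFF (φs i)) → WFF (.conj n φs)
  | prob {n p φs} : (∀ i, 0 ≤ p i) → (∑ i, p i = 1) →
      (∀ i, WFF (φs i)) → WFF (.prob n p φs)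

/-- Formulae of the sublogic `L`: no refusal construct. -/
inductive NoRef {A : Type} : Form A → Prop where
  | dia {a φ} : NoRef φ → NoRef (.dia a φ)
  | conj {n φs} : (∀ i, NoRef (φs i)) → NoRef (.conj n φs)
  | prob {n p φs} : (∀ i, NoRef (φs i)) → NoRef (.prob n p φs)

/-- The satisfaction relation `Δ ⊨ φ`. -/
inductive Sat {A : Type} : Form A → Wt (SCSP A) → Prop where
  | ref {X : Set A} {Δ Δ'} : TauStar Δ Δ' → DRefuses Δ' X → Sat (.ref X) Δ
  | dia {a φ Δ Δ'} : WeakA a Δ Δ' → Sat φ Δ' → Sat (.dia a φ) Δ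
  | conj {n φs Δ} : (∀ i, Sat (φs i) Δ) → Sat (.conj n φs) Δ
  | prob {n} {p : Fin n → ℝ} {φs Δ} (Δs : Fin n → Wt (SCSP A)) :
      (∀ i, Sat (φs i) (Δs i)) →
      TauStar Δ (fun t => ∑ i, p i * Δs i t) →
      Sat (.prob n p φs) Δ

/-- The logical preorder `⊑^L`. -/
def LPre {A : Type} (P Q : PCSP A) : Prop :=
  ∀ φ : Form A, WFF φ → NoRef φ → Sat φ P.interp → Sat φ Q.interp

/-- The logical preorder `⊑^F`. -/
def FPre {A : Type} (P Q : PCSP A) : Prop :=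
  ∀ φ : Form A, WFF φ → Sat φ Q.interp → Sat φ P.interp

mutual
/-- `CharS s φ` : `φ` is an F-characteristic formula `φ_s` of the state `s`. -/
inductive CharS : {A : Type} → SCSP A → Form A → Prop where
  | noTau {A : Type} {s : SCSP A} (n : ℕ) (a : Fin n → A)
      (Δ : Fin n → Wt (SCSP A)) (φ : Fin n → Form A) :
      (∀ Θ, ¬ Step s none Θ) →
      (∀ i, Step s (some (a i)) (Δ i)) →
      (∀ b Θ, Step s (some b) Θ → ∃ i, a i = b ∧ Δ i = Θ) →
      (∀ i, CharD (Δ i) (φ i)) →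
      CharS s (.conj (n+1) (Fin.snoc (fun i => .dia (a i) (φ i))
        (.ref {b : A | ∀ Θ, ¬ Step s (some b) Θ})))
  | tau {A : Type} {s : SCSP A} (n m : ℕ) (a : Fin n → A)
      (Δ : Fin n → Wt (SCSP A)) (φ : Fin n → Form A)
      (Θs : Fin m → Wt (SCSP A)) (ψ : Fin m → Form A) :
      (∃ Θ, Step s none Θ) →
      (∀ i, Step s (some (a i)) (Δ i)) →
      (∀ b Θ, Step s (some b) Θ → ∃ i, a i = b ∧ Δ i = Θ) →
      (∀ j, Step s none (Θs j)) →
      (∀ Θ, Step s none Θ → ∃ j, Θs j = Θ) →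
      (∀ i, CharD (Δ i) (φ i)) →
      (∀ j, CharD (Θs j) (ψ j)) →
      CharS s (.conj (n+m) (Fin.append (fun i => .dia (a i) (φ i)) ψ))
/-- `CharD Δ φ` : `φ` is an F-characteristic formula `φ_Δ` of the distribution `Δ`. -/
inductive CharD : {A : Type} → Wt (SCSP A) → Form A → Prop where
  | mk {A : Type} {Δ : Wt (SCSP A)} (n : ℕ) (s : Fin n → SCSP A) (φ : Fin n → Form A) :
      Function.Injective s →
      (∀ i, s i ∈ dsupp Δ) →
      (∀ t ∈ dsupp Δ, ∃ i, s i = t) →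
      (∀ i, CharS (s i) (φ i)) →
      CharD Δ (.prob n (fun i => Δ (s i)) φ)
end

mutual
/-- `CharSL s ψ` : `ψ` is an L-characteristic formula `ψ_s` of the state `s`. -/
inductive CharSL : {A : Type} → SCSP A → Form A → Prop where
  | noTau {A : Type} {s : SCSP A} (n : ℕ) (a : Fin n → A)
      (Δ : Fin n → Wt (SCSP A)) (φ : Fin n → Form A) :
      (∀ Θ, ¬ Step s none Θ) →
      (∀ i, Step s (some (a i)) (Δ i)) →
      (∀ b Θ, Step s (some b) Θ → ∃ i, a i = b ∧ Δ i = Θ) →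
      (∀ i, CharDL (Δ i) (φ i)) →
      CharSL s (.conj n (fun i => .dia (a i) (φ i)))
  | tau {A : Type} {s : SCSP A} (n m : ℕ) (a : Fin n → A)
      (Δ : Fin n → Wt (SCSP A)) (φ : Fin n → Form A)
      (Θs : Fin m → Wt (SCSP A)) (ψ : Fin m → Form A) :
      (∃ Θ, Step s none Θ) →
      (∀ i, Step s (some (a i)) (Δ i)) →
      (∀ b Θ, Step s (some b) Θ → ∃ i, a i = b ∧ Δ i = Θ) →
      (∀ j, Step s none (Θs j)) →
      (∀ Θ, Step s none Θ → ∃ j, Θs j = Θ) →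
      (∀ i, CharDL (Δ i) (φ i)) →
      (∀ j, CharDL (Θs j) (ψ j)) →
      CharSL s (.conj (n+m) (Fin.append (fun i => .dia (a i) (φ i)) ψ))
/-- `CharDL Δ ψ` : `ψ` is an L-characteristic formula `ψ_Δ` of the distribution `Δ`. -/
inductive CharDL : {A : Type} → Wt (SCSP A) → Form A → Prop where
  | mk {A : Type} {Δ : Wt (SCSP A)} (n : ℕ) (s : Fin n → SCSP A) (φ : Fin n → Form A) :
      Function.Injective s →
      (∀ i, s i ∈ dsupp Δ) →
      (∀ t ∈ dsupp Δ, ∃ i, s i = t) →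
      (∀ i, CharSL (s i) (φ i)) →
      CharDL Δ (.prob n (fun i => Δ (s i)) φ)
end
/-! ### The sub-language nCSP and (in)equational theories -/

mutual
/-- Membership in `nCSP`: no parallel composition. -/
inductive PNoPar : {A : Type} → PCSP A → Prop where
  | st {A : Type} {s : SCSP A} : SNoPar s → PNoPar (.st s)
  | pch {A : Type} {p : ℝ} {P Q : PCSP A} : PNoPar P → PNoPar Q → PNoPar (.pch p P Q)
inductive SNoPar : {A : Type} → SCSP A → Prop where
  | nil {A : Type} : SNoPar (SCSP.nil (A := A))
  | pre {A : Type} {a : A} {P} : PNoPar P → SNoPar (.pre a P)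
  | ich {A : Type} {P Q : PCSP A} : PNoPar P → PNoPar Q → SNoPar (.ich P Q)
  | ech {A : Type} {s t : SCSP A} : SNoPar s → SNoPar t → SNoPar (.ech s t)
end

/-- Initial actions of a state-based term (`none` denotes τ). -/
def initsS {A : Type} : SCSP A → Set (Option A)
  | .nil => ∅
  | .pre a _ => {some a}
  | .ich _ _ => {none}
  | .ech s t => initsS s ∪ initsS t
  | .par _ s t => initsS s ∪ initsS t

/-- Initial actions of a process term. -/
def initsP {A : Type} : PCSP A → Set (Option A)
  | .st s => initsS s
  | .pch _ P Q => initsP P ∪ initsP Q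

/-- Derivability in the equational theory `=_E` of Figure 3. -/
inductive EqE {A : Type} : PCSP A → PCSP A → Prop where
  | refl (P) : EqE P P
  | symm {P Q} : EqE P Q → EqE Q P
  | trans {P Q R} : EqE P Q → EqE Q R → EqE P R
  | congPre (a : A) {P Q} : EqE P Q → EqE (.st (.pre a P)) (.st (.pre a Q))
  | congIch {P₁ P₂ Q₁ Q₂} : EqE P₁ Q₁ → EqE P₂ Q₂ →
      EqE (.st (.ich P₁ P₂)) (.st (.ich Q₁ Q₂))
  | congEch {P₁ P₂ Q₁ Q₂} : EqE P₁ Q₁ → EqE P₂ Q₂ →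
      EqE (echC P₁ P₂) (echC Q₁ Q₂)
  | congPch (p : ℝ) {P₁ P₂ Q₁ Q₂} : EqE P₁ Q₁ → EqE P₂ Q₂ →
      EqE (.pch p P₁ P₂) (.pch p Q₁ Q₂)
  | P1 (p : ℝ) (h₀ : 0 < p) (h₁ : p < 1) (P) : EqE (.pch p P P) P
  | P2 (p : ℝ) (h₀ : 0 < p) (h₁ : p < 1) (P Q) :
      EqE (.pch p P Q) (.pch (1-p) Q P)
  | P3 (p q : ℝ) (hp₀ : 0 < p) (hp₁ : p < 1) (hq₀ : 0 < q) (hq₁ : q < 1) (P Q R) :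
      EqE (.pch q (.pch p P Q) R)
          (.pch (p*q) P (.pch ((1-p)*q/(1-p*q)) Q R))
  | I1 (P) : EqE (.st (.ich P P)) P
  | I2 (P Q) : EqE (.st (.ich P Q)) (.st (.ich Q P))
  | I3 (P Q R) : EqE (.st (.ich (.st (.ich P Q)) R)) (.st (.ich P (.st (.ich Q R))))
  | E1 (P) : EqE (echC P (.st .nil)) P
  | E2 (P Q) : EqE (echC P Q) (echC Q P)
  | E3 (P Q R) : EqE (echC (echC P Q) R) (echC P (echC Q R))
  | EI (a : A) (P Q) :
      EqE (echC (.st (.pre a P)) (.st (.pre a Q)))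
          (.st (.ich (.st (.pre a P)) (.st (.pre a Q))))
  | D1 (p : ℝ) (h₀ : 0 < p) (h₁ : p < 1) (P Q R) :
      EqE (echC P (.pch p Q R)) (.pch p (echC P Q) (echC P R))
  | D2 (a : A) (P Q R) :
      EqE (echC (.st (.pre a P)) (.st (.ich Q R)))
          (.st (.ich (echC (.st (.pre a P)) Q) (echC (.st (.pre a P)) R)))
  | D3 (P₁ P₂ Q₁ Q₂) :
      EqE (echC (.st (.ich P₁ P₂)) (.st (.ich Q₁ Q₂)))
          (.st (.ich
            (.st (.ich (echC P₁ (.st (.ich Q₁ Q₂))) (echC P₂ (.st (.ich Q₁ Q₂)))))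
            (.st (.ich (echC (.st (.ich P₁ P₂)) Q₁) (echC (.st (.ich P₁ P₂)) Q₂)))))

/-- Derivability from the probabilistic axioms P1–P3 and D1 only (`=_prob`). -/
inductive EqProb {A : Type} : PCSP A → PCSP A → Prop where
  | refl (P) : EqProb P P
  | symm {P Q} : EqProb P Q → EqProb Q P
  | trans {P Q R} : EqProb P Q → EqProb Q R → EqProb P R
  | congPre (a : A) {P Q} : EqProb P Q → EqProb (.st (.pre a P)) (.st (.pre a Q))
  | congIch {P₁ P₂ Q₁ Q₂} : EqProb P₁ Q₁ → EqProb P₂ Q₂ →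
      EqProb (.st (.ich P₁ P₂)) (.st (.ich Q₁ Q₂))
  | congEch {P₁ P₂ Q₁ Q₂} : EqProb P₁ Q₁ → EqProb P₂ Q₂ →
      EqProb (echC P₁ P₂) (echC Q₁ Q₂)
  | congPch (p : ℝ) {P₁ P₂ Q₁ Q₂} : EqProb P₁ Q₁ → EqProb P₂ Q₂ →
      EqProb (.pch p P₁ P₂) (.pch p Q₁ Q₂)
  | P1 (p : ℝ) (h₀ : 0 < p) (h₁ : p < 1) (P) : EqProb (.pch p P P) P
  | P2 (p : ℝ) (h₀ : 0 < p) (h₁ : p < 1) (P Q) :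
      EqProb (.pch p P Q) (.pch (1-p) Q P)
  | P3 (p q : ℝ) (hp₀ : 0 < p) (hp₁ : p < 1) (hq₀ : 0 < q) (hq₁ : q < 1) (P Q R) :
      EqProb (.pch q (.pch p P Q) R)
          (.pch (p*q) P (.pch ((1-p)*q/(1-p*q)) Q R))
  | D1 (p : ℝ) (h₀ : 0 < p) (h₁ : p < 1) (P Q R) :
      EqProb (echC P (.pch p Q R)) (.pch p (echC P Q) (echC P R))

mutual
/-- Normal forms. -/
inductive IsNF : {A : Type} → PCSP A → Prop where
  | pch {A : Type} {p : ℝ} {N₁ N₂ : PCSP A} : 0 < p → p < 1 →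
      IsNF N₁ → IsNF N₂ → IsNF (.pch p N₁ N₂)
  | ich {A : Type} {N₁ N₂ : PCSP A} : IsNF N₁ → IsNF N₂ → IsNF (.st (.ich N₁ N₂))
  | ext {A : Type} {s : SCSP A} : IsExtNF s → IsNF (.st s)
/-- External-choice normal forms `◻_{i∈I} a_i.N_i`. -/
inductive IsExtNF : {A : Type} → SCSP A → Prop where
  | nil {A : Type} : IsExtNF (SCSP.nil (A := A))
  | pre {A : Type} {a : A} {N} : IsNF N → IsExtNF (.pre a N)
  | ech {A : Type} {s t : SCSP A} : IsExtNF s → IsExtNF t → IsExtNF (.ech s t)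
end

/-- Derivability in the inequational theory for may testing (`⊑_Emay`). -/
inductive LeMay {A : Type} : PCSP A → PCSP A → Prop where
  | ofEq {P Q} : EqE P Q → LeMay P Q
  | trans {P Q R} : LeMay P Q → LeMay Q R → LeMay P R
  | congPre (a : A) {P Q} : LeMay P Q → LeMay (.st (.pre a P)) (.st (.pre a Q))
  | congIch {P₁ P₂ Q₁ Q₂} : LeMay P₁ Q₁ → LeMay P₂ Q₂ →
      LeMay (.st (.ich P₁ P₂)) (.st (.ich Q₁ Q₂))
  | congEch {P₁ P₂ Q₁ Q₂} : LeMay P₁ Q₁ → LeMay P₂ Q₂ →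
      LeMay (echC P₁ P₂) (echC Q₁ Q₂)
  | congPch (p : ℝ) {P₁ P₂ Q₁ Q₂} : LeMay P₁ Q₁ → LeMay P₂ Q₂ →
      LeMay (.pch p P₁ P₂) (.pch p Q₁ Q₂)
  | may0 (a b : A) (P Q) :
      LeMay (echC (.st (.pre a P)) (.st (.pre b Q)))
            (.st (.ich (.st (.pre a P)) (.st (.pre b Q))))
  | may0' (a b : A) (P Q) :
      LeMay (.st (.ich (.st (.pre a P)) (.st (.pre b Q))))
            (echC (.st (.pre a P)) (.st (.pre b Q)))
  | may1 (P Q) : LeMay P (.st (.ich P Q))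
  | may2 (P) : LeMay (.st .nil) P
  | may3 (a : A) (p : ℝ) (h₀ : 0 < p) (h₁ : p < 1) (P Q) :
      LeMay (.st (.pre a (.pch p P Q))) (.pch p (.st (.pre a P)) (.st (.pre a Q)))

/-- Derivability in the inequational theory for must testing (`⊑_Emust`). -/
inductive LeMust {A : Type} : PCSP A → PCSP A → Prop where
  | ofEq {P Q} : EqE P Q → LeMust P Q
  | trans {P Q R} : LeMust P Q → LeMust Q R → LeMust P R
  | congPre (a : A) {P Q} : LeMust P Q → LeMust (.st (.pre a P)) (.st (.pre a Q))
  | congIch {P₁ P₂ Q₁ Q₂} : LeMust P₁ Q₁ → LeMust P₂ Q₂ →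
      LeMust (.st (.ich P₁ P₂)) (.st (.ich Q₁ Q₂))
  | congEch {P₁ P₂ Q₁ Q₂} : LeMust P₁ Q₁ → LeMust P₂ Q₂ →
      LeMust (echC P₁ P₂) (echC Q₁ Q₂)
  | congPch (p : ℝ) {P₁ P₂ Q₁ Q₂} : LeMust P₁ Q₁ → LeMust P₂ Q₂ →
      LeMust (.pch p P₁ P₂) (.pch p Q₁ Q₂)
  | must1 (P Q) : LeMust (.st (.ich P Q)) Q
  | must2 (n : ℕ) (a : Fin (n+1) → A) (m : Fin (n+1) → ℕ)
      (p : (i : Fin (n+1)) → Fin (m i + 1) → ℝ)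
      (Q : (i : Fin (n+1)) → Fin (m i + 1) → PCSP A)
      (P : (i : Fin (n+1)) → Fin (m i + 1) → PCSP A)
      (R : PCSP A) :
      (∀ i j, 0 ≤ p i j) → (∀ i, ∑ j, p i j = 1) →
      initsP R ⊆ {α | ∃ i, α = some (a i)} →
      LeMust
        (.st (.ich R (ichFin n (fun i =>
          pchFin (m i) (p i) (fun j => echC (.st (.pre (a i) (Q i j))) (P i j))))))
        (.st (echFin n (fun i => .pre (a i) (pchFin (m i) (p i) (Q i)))))

/-! ### Auxiliary machinery for Lemma 6.7 -/

section CharAux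

variable {A : Type}

mutual
/-- Size of a process term. -/
def sizeP : PCSP A → ℕ
  | .st s => sizeS s + 1
  | .pch _ P Q => sizeP P + sizeP Q + 1
/-- Size of a state term. -/
def sizeS : SCSP A → ℕ
  | .nil => 1
  | .pre _ P => sizeP P + 1
  | .ich P Q => sizeP P + sizeP Q + 1
  | .ech s t => sizeS s + sizeS t + 1
  | .par _ s t => sizeS s + sizeS t + 1
end

theorem sizeS_pos (s : SCSP A) : 1 ≤ sizeS s := by
  cases s <;> simp [sizeS] <;> omega

theorem dsupp_dirac {X : Type} (x : X) : dsupp (dirac x) = {x} := by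
  ext y
  by_cases h : y = x <;> simp [dsupp, dirac, Function.mem_support, h]

theorem dsupp_dmap {X Y : Type} (g : X → Y) (Δ : Wt X) :
    dsupp (dmap g Δ) ⊆ g '' dsupp Δ := by
  intro y hy
  by_contra h
  apply hy
  show dmap g Δ y = 0
  apply finsum_mem_of_eqOn_zero
  intro x hx
  by_contra hΔx
  exact h ⟨x, hΔx, hx⟩

theorem interp_size : ∀ P : PCSP A, ∀ t ∈ dsupp P.interp, sizeS t ≤ sizeP P
  | .st s => by
      intro t ht
      have hts : t = s := by
        have := dsupp_dirac s ▸ ht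
        simpa using this
      subst hts
      simp [PCSP.interp, sizeP]
  | .pch p P Q => by
      intro t ht
      have h : P.interp t ≠ 0 ∨ Q.interp t ≠ 0 := by
        by_contra h
        push_neg at h
        apply ht
        show p * P.interp t + (1 - p) * Q.interp t = 0
        simp [h.1, h.2]
      rcases h with h | h
      · have := interp_size P t h
        simp [sizeP]; omega
      · have := interp_size Q t h
        simp [sizeP]; omega

theorem interp_finite : ∀ P : PCSP A, (dsupp P.interp).Finite
  | .st s => by
      rw [show dsupp (PCSP.interp (.st s)) = {s} from dsupp_dirac s]
      exact Set.finite_singleton s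
  | .pch p P Q => by
      apply ((interp_finite P).union (interp_finite Q)).subset
      intro t ht
      by_contra h
      simp only [Set.mem_union] at h
      apply ht
      have h1 : P.interp t = 0 := by
        by_contra h1; exact h (Or.inl h1)
      have h2 : Q.interp t = 0 := by
        by_contra h2; exact h (Or.inr h2)
      show p * P.interp t + (1 - p) * Q.interp t = 0
      simp [h1, h2]

/-- Distributions reached in one step have states of strictly smaller size. -/
theorem step_size {s : SCSP A} {α Δ} (h : Step s α Δ) :
    ∀ t ∈ dsupp Δ, sizeS t < sizeS s := by
  induction h with
  | pre a P =>
      intro t ht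
      have := interp_size P t ht
      simp [sizeS]; omega
  | ichL P Q =>
      intro t ht
      have := interp_size P t ht
      simp [sizeS]; omega
  | ichR P Q =>
      intro t ht
      have := interp_size Q t ht
      simp [sizeS]; omega
  | echL h ih =>
      intro t ht
      have := ih t ht
      simp [sizeS]; omega
  | echR h ih =>
      intro t ht
      have := ih t ht
      simp [sizeS]; omega
  | echTL h ih =>
      intro t ht
      obtain ⟨u, hu, rfl⟩ := dsupp_dmap _ _ ht
      have := ih u hu
      simp [sizeS]; omega
  | echTR h ih =>
      intro t ht
      obtain ⟨u, hu, rfl⟩ := dsupp_dmap _ _ ht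
      have := ih u hu
      simp [sizeS]; omega
  | parL h hc ih =>
      intro t ht
      obtain ⟨u, hu, rfl⟩ := dsupp_dmap _ _ ht
      have := ih u hu
      simp [sizeS]; omega
  | parR h hc ih =>
      intro t ht
      obtain ⟨u, hu, rfl⟩ := dsupp_dmap _ _ ht
      have := ih u hu
      simp [sizeS]; omega
  | parS hmem h1 h2 ih1 ih2 =>
      intro t ht
      obtain ⟨q, hq, rfl⟩ := dsupp_dmap _ _ ht
      have hq1 : q.1 ∈ dsupp _ := left_ne_zero_of_mul hq
      have hq2 : q.2 ∈ dsupp _ := right_ne_zero_of_mul hq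
      have := ih1 q.1 hq1
      have := ih2 q.2 hq2
      simp [sizeS]; omega

/-- Distributions reached in one step have finite support. -/
theorem step_supp_finite {s : SCSP A} {α Δ} (h : Step s α Δ) :
    (dsupp Δ).Finite := by
  induction h with
  | pre a P => exact interp_finite P
  | ichL P Q => exact interp_finite P
  | ichR P Q => exact interp_finite Q
  | echL h ih => exact ih
  | echR h ih => exact ih
  | echTL h ih => exact (ih.image _).subset (dsupp_dmap _ _)
  | echTR h ih => exact (ih.image _).subset (dsupp_dmap _ _)
  | parL h hc ih => exact (ih.image _).subset (dsupp_dmap _ _)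
  | parR h hc ih => exact (ih.image _).subset (dsupp_dmap _ _)
  | parS hmem h1 h2 ih1 ih2 =>
      refine (((ih1.prod ih2).subset ?_).image _).subset (dsupp_dmap _ _)
      intro q hq
      exact ⟨left_ne_zero_of_mul hq, right_ne_zero_of_mul hq⟩

/-- The set of transitions of a state. -/
def transSet (s : SCSP A) : Set (Option A × Wt (SCSP A)) := {p | Step s p.1 p.2}

theorem transSet_finite : ∀ s : SCSP A, (transSet s).Finite
  | .nil => by
      apply Set.Finite.subset (Set.finite_empty)
      rintro ⟨α, Δ⟩ h
      cases h
  | .pre a P => by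
      apply Set.Finite.subset (Set.finite_singleton ((some a : Option A), P.interp))
      rintro ⟨α, Δ⟩ h
      cases h
      rfl
  | .ich P Q => by
      apply Set.Finite.subset (Set.Finite.insert ((none : Option A), P.interp)
        (Set.finite_singleton ((none : Option A), Q.interp)))
      rintro ⟨α, Δ⟩ h
      cases h
      · exact Set.mem_insert _ _
      · exact Set.mem_insert_of_mem _ rfl
  | .ech s t => by
      have h1 := transSet_finite s
      have h2 := transSet_finite t
      apply Set.Finite.subset ((h1.image (fun p : Option A × Wt (SCSP A) =>
          p.1.elim ((none : Option A), dmap (fun u => SCSP.ech u t) p.2) (fun _ => p))).union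
        (h2.image (fun p : Option A × Wt (SCSP A) =>
          p.1.elim ((none : Option A), dmap (fun u => SCSP.ech s u) p.2) (fun _ => p))))
      rintro ⟨α, Δ⟩ h
      cases h with
      | echL h => exact Or.inl ⟨(_, Δ), h, rfl⟩
      | echR h => exact Or.inr ⟨(_, Δ), h, rfl⟩
      | echTL h => exact Or.inl ⟨(none, _), h, rfl⟩
      | echTR h => exact Or.inr ⟨(none, _), h, rfl⟩
  | .par B s t => by
      have h1 := transSet_finite s
      have h2 := transSet_finite t
      apply Set.Finite.subset (((h1.image (fun p : Option A × Wt (SCSP A) =>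
          (p.1, dmap (fun u => SCSP.par B u t) p.2))).union
        (h2.image (fun p : Option A × Wt (SCSP A) =>
          (p.1, dmap (fun u => SCSP.par B s u) p.2)))).union
        ((h1.prod h2).image (fun q : (Option A × Wt (SCSP A)) × (Option A × Wt (SCSP A)) =>
          ((none : Option A), dmap (fun r : SCSP A × SCSP A => SCSP.par B r.1 r.2)
            (fun r => q.1.2 r.1 * q.2.2 r.2)))))
      rintro ⟨α, Δ⟩ h
      cases h with
      | @parL _ _ _ _ Δ' h hc => exact Or.inl (Or.inl ⟨(α, Δ'), h, rfl⟩)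
      | @parR _ _ _ _ Δ' h hc => exact Or.inl (Or.inr ⟨(α, Δ'), h, rfl⟩)
      | @parS _ _ _ a Δ₁ Δ₂ hmem hs ht =>
          exact Or.inr ⟨((some a, Δ₁), (some a, Δ₂)), ⟨hs, ht⟩, rfl⟩

theorem visSet_finite (s : SCSP A) :
    {q : A × Wt (SCSP A) | Step s (some q.1) q.2}.Finite := by
  have : {q : A × Wt (SCSP A) | Step s (some q.1) q.2} =
      (fun q : A × Wt (SCSP A) => ((some q.1 : Option A), q.2)) ⁻¹' transSet s := rfl
  rw [this]
  apply Set.Finite.preimage _ (transSet_finite s)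
  intro q _ q' _ h
  have h1 := congrArg Prod.fst h
  have h2 := congrArg Prod.snd h
  simp at h1
  exact Prod.ext h1 h2

theorem tauSet_finite (s : SCSP A) : {Θ : Wt (SCSP A) | Step s none Θ}.Finite := by
  have : {Θ : Wt (SCSP A) | Step s none Θ} =
      (fun Θ : Wt (SCSP A) => ((none : Option A), Θ)) ⁻¹' transSet s := rfl
  rw [this]
  apply Set.Finite.preimage _ (transSet_finite s)
  intro Θ _ Θ' _ h
  exact congrArg Prod.snd h

/-! ### Existence of characteristic formulae -/

theorem exists_charD_of {Δ : Wt (SCSP A)} (hfin : (dsupp Δ).Finite)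
    (h : ∀ t ∈ dsupp Δ, ∃ φ, CharS t φ) : ∃ φ, CharD Δ φ := by
  obtain ⟨n, f, hf⟩ := hfin.fin_embedding
  have hmem : ∀ i, f i ∈ dsupp Δ := fun i => hf ▸ Set.mem_range_self i
  choose φ hφ using fun i => h (f i) (hmem i)
  exact ⟨_, CharD.mk n f φ f.injective hmem
    (fun t ht => by rw [← hf] at ht; exact ht) hφ⟩

theorem exists_charDL_of {Δ : Wt (SCSP A)} (hfin : (dsupp Δ).Finite)
    (h : ∀ t ∈ dsupp Δ, ∃ φ, CharSL t φ) : ∃ φ, CharDL Δ φ := by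
  obtain ⟨n, f, hf⟩ := hfin.fin_embedding
  have hmem : ∀ i, f i ∈ dsupp Δ := fun i => hf ▸ Set.mem_range_self i
  choose φ hφ using fun i => h (f i) (hmem i)
  exact ⟨_, CharDL.mk n f φ f.injective hmem
    (fun t ht => by rw [← hf] at ht; exact ht) hφ⟩

theorem exists_char : ∀ (N : ℕ) (s : SCSP A), sizeS s ≤ N →
    (∃ φ, CharS s φ) ∧ (∃ φ, CharSL s φ) := by
  intro N
  induction N with
  | zero => intro s hs; have := sizeS_pos s; omega
  | succ N ih =>
      intro s hs
      obtain ⟨n, f, hf⟩ := (visSet_finite s).fin_embedding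
      have hvis : ∀ i, Step s (some (f i).1) (f i).2 := by
        intro i
        have : f i ∈ {q : A × Wt (SCSP A) | Step s (some q.1) q.2} :=
          hf ▸ Set.mem_range_self i
        exact this
      have hcov : ∀ b Θ, Step s (some b) Θ → ∃ i, (f i).1 = b ∧ (f i).2 = Θ := by
        intro b Θ hst
        have : (b, Θ) ∈ Set.range f := hf ▸ hst
        obtain ⟨i, hi⟩ := this
        exact ⟨i, congrArg Prod.fst hi, congrArg Prod.snd hi⟩
      have htarget : ∀ {α Δ}, Step s α Δ →
          (∃ φ, CharD Δ φ) ∧ (∃ φ, CharDL Δ φ) := by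
        intro α Δ hst
        have hfin := step_supp_finite hst
        have hsmall : ∀ t ∈ dsupp Δ, sizeS t ≤ N := fun t ht => by
          have := step_size hst t ht; omega
        exact ⟨exists_charD_of hfin (fun t ht => (ih t (hsmall t ht)).1),
          exists_charDL_of hfin (fun t ht => (ih t (hsmall t ht)).2)⟩
      choose φ hφ using fun i => (htarget (hvis i)).1
      choose φL hφL using fun i => (htarget (hvis i)).2
      by_cases htau : ∃ Θ, Step s none Θ
      · obtain ⟨m, g, hg⟩ := (tauSet_finite s).fin_embedding
        have hgt : ∀ j, Step s none (g j) := by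
          intro j
          have : g j ∈ {Θ : Wt (SCSP A) | Step s none Θ} := hg ▸ Set.mem_range_self j
          exact this
        have hgcov : ∀ Θ, Step s none Θ → ∃ j, g j = Θ := by
          intro Θ hst
          have : Θ ∈ Set.range g := by rw [hg]; exact hst
          exact this
        choose ψ hψ using fun j => (htarget (hgt j)).1
        choose ψL hψL using fun j => (htarget (hgt j)).2
        exact ⟨⟨_, CharS.tau n m _ _ φ g ψ htau hvis hcov hgt hgcov hφ hψ⟩,
          ⟨_, CharSL.tau n m _ _ φL g ψL htau hvis hcov hgt hgcov hφL hψL⟩⟩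
      · push_neg at htau
        exact ⟨⟨_, CharS.noTau n _ _ φ htau hvis hcov hφ⟩,
          ⟨_, CharSL.noTau n _ _ φL htau hvis hcov hφL⟩⟩

/-! ### Satisfaction of characteristic formulae -/

theorem sum_dirac_eq {Δ : Wt (SCSP A)} {n} {s : Fin n → SCSP A}
    (hinj : Function.Injective s) (hmem : ∀ i, s i ∈ dsupp Δ)
    (hcov : ∀ t ∈ dsupp Δ, ∃ i, s i = t) :
    Δ = fun t => ∑ i, Δ (s i) * dirac (s i) t := by
  funext t
  by_cases ht : t ∈ dsupp Δ
  · obtain ⟨i, hi⟩ := hcov t ht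
    rw [Finset.sum_eq_single i]
    · simp [dirac, hi]
    · intro j _ hj
      have hne : t ≠ s j := fun h => hj (hinj (h.symm.trans hi.symm))
      simp [dirac, hne]
    · simp
  · have hΔt : Δ t = 0 := Function.notMem_support.mp ht
    rw [hΔt]
    symm
    apply Finset.sum_eq_zero
    intro i _
    by_cases h : t = s i
    · rw [← h, hΔt]; ring
    · simp [dirac, h]

theorem stepD_dirac {s : SCSP A} {a : A} {Δ} (h : Step s (some a) Δ) :
    StepD (some a) (dirac s) Δ := by
  refine ⟨1, fun _ => 1, fun _ => s, fun _ => Δ, fun _ => zero_le_one, by simp,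
    funext fun t => by simp, fun _ => h, funext fun t => by simp⟩

theorem tauStar_dirac_step {s : SCSP A} {Θ} (h : Step s none Θ) :
    TauStar (dirac s) Θ := by
  apply Relation.ReflTransGen.single
  exact ⟨1, fun _ => 1, fun _ => s, fun _ => Θ, fun _ => zero_le_one, by simp,
    funext fun t => by simp, fun _ => Or.inl h, funext fun t => by simp⟩

/-- Satisfaction is closed under prefixing with `==τ̂==>`. -/
theorem sat_taustar_pre : ∀ (φ : Form A) {Δ Θ : Wt (SCSP A)},
    TauStar Δ Θ → Sat φ Θ → Sat φ Δ := by
  intro φ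
  induction φ with
  | ref X =>
      intro Δ Θ h hs
      cases hs with
      | ref h1 h2 => exact Sat.ref (h.trans h1) h2
  | dia a ψ ih =>
      intro Δ Θ h hs
      cases hs with
      | dia hw hsat =>
          obtain ⟨Δ₁, Δ₂, h1, h2, h3⟩ := hw
          exact Sat.dia ⟨Δ₁, Δ₂, h.trans h1, h2, h3⟩ hsat
  | conj n φs ih =>
      intro Δ Θ h hs
      cases hs with
      | conj hall => exact Sat.conj fun i => ih i h (hall i)
  | prob n p φs ih =>
      intro Δ Θ h hs
      cases hs with
      | prob Δs hall ht => exact Sat.prob Δs hall (h.trans ht)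

theorem satD {A : Type} {Δ : Wt (SCSP A)} {φ : Form A} (h : CharD Δ φ) : Sat φ Δ := by
  refine CharD.rec (motive_1 := fun s φ _ => Sat φ (dirac s))
    (motive_2 := fun Δ φ _ => Sat φ Δ) ?_ ?_ ?_ h
  · intro s n a Δ φs hno hvis hcov hch ih
    refine Sat.conj fun i => ?_
    refine Fin.lastCases ?_ (fun i => ?_) i
    · rw [Fin.snoc_last]
      refine Sat.ref Relation.ReflTransGen.refl ?_
      intro t ht
      have hts : t = s := by
        have := dsupp_dirac s ▸ ht
        simpa using this
      subst hts
      exact ⟨hno, fun b hb Θ => hb Θ⟩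
    · rw [Fin.snoc_castSucc]
      exact Sat.dia ⟨dirac s, Δ i, Relation.ReflTransGen.refl,
        stepD_dirac (hvis i), Relation.ReflTransGen.refl⟩ (ih i)
  · intro s n m a Δ φs Θs ψs hex hvis hcov htau htcov hchD hchT ihD ihT
    refine Sat.conj fun i => ?_
    refine Fin.addCases (fun i => ?_) (fun j => ?_) i
    · rw [Fin.append_left]
      exact Sat.dia ⟨dirac s, Δ i, Relation.ReflTransGen.refl,
        stepD_dirac (hvis i), Relation.ReflTransGen.refl⟩ (ihD i)
    · rw [Fin.append_right]
      exact sat_taustar_pre _ (tauStar_dirac_step (htau j)) (ihT j)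
  · intro Δ n s φs hinj hmem hcov hch ih
    exact Sat.prob (fun i => dirac (s i)) ih
      (sum_dirac_eq hinj hmem hcov ▸ Relation.ReflTransGen.refl)

theorem satDL {A : Type} {Δ : Wt (SCSP A)} {φ : Form A} (h : CharDL Δ φ) : Sat φ Δ := by
  refine CharDL.rec (motive_1 := fun s φ _ => Sat φ (dirac s))
    (motive_2 := fun Δ φ _ => Sat φ Δ) ?_ ?_ ?_ h
  · intro s n a Δ φs hno hvis hcov hch ih
    refine Sat.conj fun i => ?_
    exact Sat.dia ⟨dirac s, Δ i, Relation.ReflTransGen.refl,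
      stepD_dirac (hvis i), Relation.ReflTransGen.refl⟩ (ih i)
  · intro s n m a Δ φs Θs ψs hex hvis hcov htau htcov hchD hchT ihD ihT
    refine Sat.conj fun i => ?_
    refine Fin.addCases (fun i => ?_) (fun j => ?_) i
    · rw [Fin.append_left]
      exact Sat.dia ⟨dirac s, Δ i, Relation.ReflTransGen.refl,
        stepD_dirac (hvis i), Relation.ReflTransGen.refl⟩ (ihD i)
    · rw [Fin.append_right]
      exact sat_taustar_pre _ (tauStar_dirac_step (htau j)) (ihT j)
  · intro Δ n s φs hinj hmem hcov hch ih
    exact Sat.prob (fun i => dirac (s i)) ih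
      (sum_dirac_eq hinj hmem hcov ▸ Relation.ReflTransGen.refl)

end CharAux

/-- Lemma 6.7: every distribution satisfies its own characteristic
formulae, in both the logic F and the sublogic L. -/
theorem sat_characteristic_formula (A : Type) [Fintype A]
    (Δ : Wt (SCSP A)) (hΔ : IsDist Δ) :
    (∃ φ : Form A, CharD Δ φ) ∧ (∀ φ : Form A, CharD Δ φ → Sat φ Δ) ∧
    (∃ ψ : Form A, CharDL Δ ψ) ∧ (∀ ψ : Form A, CharDL Δ ψ → Sat ψ Δ) := by
  have hS : ∀ s : SCSP A, (∃ φ, CharS s φ) ∧ (∃ φ, CharSL s φ) :=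
    fun s => exists_char (sizeS s) s le_rfl
  exact ⟨exists_charD_of hΔ.2.1 (fun t _ => (hS t).1), fun φ h => satD h,
    exists_charDL_of hΔ.2.1 (fun t _ => (hS t).2), fun ψ h => satDL h⟩

end PaperPCSP
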